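/- Let A ∈ ℝ^{n×n}, B ∈ ℝ^{n×m}, C ∈ ℝ^{p×n}, D ∈ ℝ^{p×m}, B_d ∈ ℝ^{n×n_d}, F₁, F₂ ∈ ℝ^{m×n}, and let K ∈ ℝ^{N×N} be symmetric with eigenvalues γ₁,…,γ_N counted with multiplicity. For γ ∈ ℝ set A_γ = A − B(F₁+γF₂) and C_γ = C − D(F₁+γF₂), and set Â = I_N⊗(A−BF₁) − K⊗(BF₂) and Ĉ = I_N⊗(C−DF₁) − K⊗(DF₂). Let s ∈ ℂ be such that sI_n − A_{γᵢ} is invertible for every i. Then sI_{Nn} − Â is invertible and the squared Frobenius norm satisfies ‖Ĉ(sI_{Nn} − Â)⁻¹(I_N⊗B_d)‖_F² = Σ_{i=1}^{N} ‖C_{γᵢ}(sI_n − A_{γᵢ})⁻¹B_d‖_F². -/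

import Mathlib

open Matrix
open scoped Kronecker

/-- The squared Frobenius norm of a complex matrix: the sum of the squared absolute values
of its entries. -/
noncomputable def sqFrobNorm {α β : Type*} [Fintype α] [Fintype β]
    (M : Matrix α β ℂ) : ℝ :=
  ∑ i, ∑ j, ‖M i j‖ ^ 2

set_option linter.unusedSectionVars false

namespace StmtAux

variable {ι κ α β γ : Type*} [Fintype ι] [DecidableEq ι] [Fintype α] [Fintype β] [Fintype γ]

/-- block diagonal in Kronecker index ordering -/
def kd (f : ι → Matrix α β ℂ) : Matrix (ι × α) (ι × β) ℂ :=
  Matrix.of fun p q => if p.1 = q.1 then f p.1 p.2 q.2 else 0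

lemma kd_mul (f : ι → Matrix α β ℂ) (g : ι → Matrix β γ ℂ) :
    kd f * kd g = kd (fun i => f i * g i) := by
  ext ⟨i, a⟩ ⟨j, b⟩
  simp only [kd, Matrix.mul_apply, Matrix.of_apply, Fintype.sum_prod_type]
  by_cases h : i = j
  · subst h
    simp [Finset.sum_ite_eq, Matrix.mul_apply]
  · simp only [if_neg h]
    refine Finset.sum_eq_zero fun k _ => Finset.sum_eq_zero fun c _ => ?_
    by_cases h1 : i = k
    · subst h1; simp [h]
    · simp [h1]

lemma kd_one [DecidableEq α] : kd (fun _ : ι => (1 : Matrix α α ℂ)) = 1 := by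
  ext ⟨i, a⟩ ⟨j, b⟩
  by_cases h : i = j <;> by_cases h2 : a = b <;>
    simp [kd, Matrix.one_apply, Prod.ext_iff, h, h2]

lemma one_kron_eq_kd [DecidableEq α] (M : Matrix α β ℂ) :
    (1 : Matrix ι ι ℂ) ⊗ₖ M = kd (fun _ => M) := by
  ext ⟨i, a⟩ ⟨j, b⟩
  simp [kd, Matrix.one_apply, kroneckerMap_apply, ite_mul]

lemma diagonal_kron_eq_kd (d : ι → ℂ) (M : Matrix α β ℂ) :
    (diagonal d) ⊗ₖ M = kd (fun i => d i • M) := by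
  ext ⟨i, a⟩ ⟨j, b⟩
  simp [kd, Matrix.diagonal_apply, kroneckerMap_apply, ite_mul]

lemma map_kron {a b c d : Type*} (P : Matrix a b ℝ) (Q : Matrix c d ℝ) :
    (P ⊗ₖ Q).map Complex.ofReal = (P.map Complex.ofReal) ⊗ₖ (Q.map Complex.ofReal) := by
  ext ⟨i, x⟩ ⟨j, y⟩
  simp [kroneckerMap_apply]

lemma mapSmulC {a b : Type*} (r : ℝ) (M : Matrix a b ℝ) :
    (r • M).map Complex.ofReal = (r : ℂ) • (M.map Complex.ofReal) := by
  ext i j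
  simp

lemma kron_conjTranspose {a b c d : Type*} (P : Matrix a b ℂ) (Q : Matrix c d ℂ) :
    (P ⊗ₖ Q)ᴴ = Pᴴ ⊗ₖ Qᴴ := by
  ext ⟨i, x⟩ ⟨j, y⟩
  simp [kroneckerMap_apply, conjTranspose_apply, mul_comm]

lemma sqFrobNorm_eq_trace {a b : Type*} [Fintype a] [Fintype b] (M : Matrix a b ℂ) :
    sqFrobNorm M = (Matrix.trace (Mᴴ * M)).re := by
  simp only [Matrix.trace, Matrix.diag, Matrix.mul_apply, conjTranspose_apply, sqFrobNorm]
  rw [Complex.re_sum]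
  rw [Finset.sum_comm]
  refine Finset.sum_congr rfl fun i _ => ?_
  rw [Complex.re_sum]
  refine Finset.sum_congr rfl fun j _ => ?_
  simp [Complex.star_def, ← Complex.normSq_eq_conj_mul_self, Complex.normSq_eq_norm_sq,
    ← Complex.ofReal_pow]

lemma sqFrobNorm_conj {a b c d : Type*} [Fintype a] [Fintype b] [Fintype c] [Fintype d]
    [DecidableEq b] [DecidableEq c]
    (V : Matrix a b ℂ) (M : Matrix b c ℂ) (W : Matrix c d ℂ)
    (hV : Vᴴ * V = 1) (hW : W * Wᴴ = 1) :
    sqFrobNorm (V * M * W) = sqFrobNorm M := by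
  rw [sqFrobNorm_eq_trace, sqFrobNorm_eq_trace]
  congr 1
  rw [conjTranspose_mul, conjTranspose_mul]
  have h1 : Wᴴ * (Mᴴ * Vᴴ) * (V * M * W) = Wᴴ * (Mᴴ * M) * W := by
    simp only [Matrix.mul_assoc]
    rw [← Matrix.mul_assoc Vᴴ V (M * W), hV, Matrix.one_mul]
  rw [h1, Matrix.trace_mul_cycle, ← Matrix.mul_assoc, hW, Matrix.one_mul]

lemma sqFrobNorm_kd (f : ι → Matrix α β ℂ) :
    sqFrobNorm (kd f) = ∑ i, sqFrobNorm (f i) := by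
  simp only [sqFrobNorm, kd, Matrix.of_apply, Fintype.sum_prod_type]
  refine Finset.sum_congr rfl fun i _ => ?_
  refine Finset.sum_congr rfl fun a _ => ?_
  simp [apply_ite (fun z : ℂ => ‖z‖), apply_ite (· ^ (2:ℕ)), Finset.sum_ite_irrel,
    Finset.sum_ite_eq]

end StmtAux
-- extra aux lemmas (appended into namespace StmtAux)
namespace StmtAux

lemma mapMulC {a b c : Type*} [Fintype b] (P : Matrix a b ℝ) (Q : Matrix b c ℝ) :
    (P * Q).map Complex.ofReal = P.map Complex.ofReal * Q.map Complex.ofReal := by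
  ext i j
  simp only [Matrix.map_apply, Matrix.mul_apply]
  push_cast
  rfl

lemma mapSubC {a b : Type*} (P Q : Matrix a b ℝ) :
    (P - Q).map Complex.ofReal = P.map Complex.ofReal - Q.map Complex.ofReal := by
  ext i j; simp

lemma mapOneC {a : Type*} [Fintype a] [DecidableEq a] :
    (1 : Matrix a a ℝ).map Complex.ofReal = 1 := by
  ext i j
  simp [Matrix.one_apply, apply_ite Complex.ofReal]

lemma map_conjT {a b : Type*} (P : Matrix a b ℝ) :
    (Pᴴ).map Complex.ofReal = (P.map Complex.ofReal)ᴴ := by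
  ext i j
  simp [Matrix.conjTranspose_apply, Complex.conj_ofReal]

variable {ι α β : Type*} [Fintype ι] [DecidableEq ι] [Fintype α] [Fintype β]

lemma kd_sub (f g : ι → Matrix α β ℂ) :
    kd (fun i => f i - g i) = kd f - kd g := by
  ext ⟨i, a⟩ ⟨j, b⟩
  by_cases h : i = j <;> simp [kd, h]

lemma kd_const_smul_one [DecidableEq α] (t : ℂ) :
    kd (fun _ : ι => t • (1 : Matrix α α ℂ)) = t • 1 := by
  rw [← one_kron_eq_kd, kronecker_smul, one_kronecker_one]

end StmtAux

open StmtAux in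
/-- Decomposition of the squared Frobenius norm of the closed-loop transfer matrix: if
`K` is symmetric with eigenvalues `γ₁,…,γ_N` (with multiplicity) and `sIₙ − A_{γᵢ}` is
invertible for every `i`, then `sI_{Nn} − Â` is invertible and
`‖Ĉ (sI − Â)⁻¹ (I_N ⊗ B_d)‖_F² = Σᵢ ‖C_{γᵢ} (sI − A_{γᵢ})⁻¹ B_d‖_F²`. -/
theorem stmt_11 {n m p nd N : ℕ}
    (A : Matrix (Fin n) (Fin n) ℝ) (B : Matrix (Fin n) (Fin m) ℝ)
    (C : Matrix (Fin p) (Fin n) ℝ) (D : Matrix (Fin p) (Fin m) ℝ)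
    (Bd : Matrix (Fin n) (Fin nd) ℝ) (F₁ F₂ : Matrix (Fin m) (Fin n) ℝ)
    (K : Matrix (Fin N) (Fin N) ℝ) (hK : K.IsHermitian)
    (Ahat : Matrix (Fin N × Fin n) (Fin N × Fin n) ℝ)
    (hAhat : Ahat = (1 : Matrix (Fin N) (Fin N) ℝ) ⊗ₖ (A - B * F₁) - K ⊗ₖ (B * F₂))
    (Chat : Matrix (Fin N × Fin p) (Fin N × Fin n) ℝ)
    (hChat : Chat = (1 : Matrix (Fin N) (Fin N) ℝ) ⊗ₖ (C - D * F₁) - K ⊗ₖ (D * F₂))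
    (s : ℂ)
    (hs : ∀ i : Fin N,
      IsUnit (s • (1 : Matrix (Fin n) (Fin n) ℂ)
        - (A - B * (F₁ + hK.eigenvalues i • F₂)).map Complex.ofReal)) :
    IsUnit (s • (1 : Matrix (Fin N × Fin n) (Fin N × Fin n) ℂ) - Ahat.map Complex.ofReal) ∧
    sqFrobNorm (Chat.map Complex.ofReal
        * (s • (1 : Matrix (Fin N × Fin n) (Fin N × Fin n) ℂ) - Ahat.map Complex.ofReal)⁻¹
        * ((1 : Matrix (Fin N) (Fin N) ℝ) ⊗ₖ Bd).map Complex.ofReal)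
      = ∑ i : Fin N,
          sqFrobNorm ((C - D * (F₁ + hK.eigenvalues i • F₂)).map Complex.ofReal
            * (s • (1 : Matrix (Fin n) (Fin n) ℂ)
                - (A - B * (F₁ + hK.eigenvalues i • F₂)).map Complex.ofReal)⁻¹
            * Bd.map Complex.ofReal) := by
  classical
  set γ : Fin N → ℝ := hK.eigenvalues with hγdef
  set U : Matrix (Fin N) (Fin N) ℝ := (hK.eigenvectorUnitary : Matrix (Fin N) (Fin N) ℝ)
    with hUdef
  set Uc : Matrix (Fin N) (Fin N) ℂ := U.map Complex.ofReal with hUcdef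
  -- unitarity of U over ℝ, transported to ℂ
  have hU1r : star U * U = 1 := Matrix.UnitaryGroup.star_mul_self hK.eigenvectorUnitary
  have hU2r : U * star U = 1 := Matrix.mem_unitaryGroup_iff.mp hK.eigenvectorUnitary.2
  have hstarmap : (star U).map Complex.ofReal = Ucᴴ := by
    rw [Matrix.star_eq_conjTranspose, map_conjT]
  have hU1 : Ucᴴ * Uc = 1 := by
    rw [← hstarmap, hUcdef, ← mapMulC, hU1r, mapOneC]
  have hU2 : Uc * Ucᴴ = 1 := by
    rw [← hstarmap, hUcdef, ← mapMulC, hU2r, mapOneC]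
  -- spectral theorem over ℂ
  have hKspec : K.map Complex.ofReal = Uc * diagonal (fun i => (γ i : ℂ)) * Ucᴴ := by
    have h := hK.spectral_theorem
    rw [RCLike.ofReal_real_eq_id] at h
    calc K.map Complex.ofReal
        = (U * diagonal (id ∘ γ) * star U).map Complex.ofReal := by rw [h, Unitary.conjStarAlgAut_apply]
      _ = Uc * diagonal (fun i => (γ i : ℂ)) * Ucᴴ := by
          rw [mapMulC, mapMulC, hstarmap]
          congr 2
          rw [Matrix.diagonal_map (by simp)]
          rfl
  -- abbreviations
  set M₁ : Matrix (Fin n) (Fin n) ℂ := (A - B * F₁).map Complex.ofReal with hM₁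
  set M₂ : Matrix (Fin n) (Fin n) ℂ := (B * F₂).map Complex.ofReal with hM₂
  set C₁ : Matrix (Fin p) (Fin n) ℂ := (C - D * F₁).map Complex.ofReal with hC₁
  set C₂ : Matrix (Fin p) (Fin n) ℂ := (D * F₂).map Complex.ofReal with hC₂
  set Bdc : Matrix (Fin n) (Fin nd) ℂ := Bd.map Complex.ofReal with hBdc
  set X : Fin N → Matrix (Fin n) (Fin n) ℂ := fun i =>
    s • (1 : Matrix (Fin n) (Fin n) ℂ)
      - (A - B * (F₁ + γ i • F₂)).map Complex.ofReal with hXdef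
  set Y : Fin N → Matrix (Fin p) (Fin n) ℂ := fun i =>
    (C - D * (F₁ + γ i • F₂)).map Complex.ofReal with hYdef
  have hXeq : ∀ i, X i = s • (1 : Matrix (Fin n) (Fin n) ℂ) - (M₁ - (γ i : ℂ) • M₂) := by
    intro i
    have h2 : A - B * (F₁ + γ i • F₂) = (A - B * F₁) - γ i • (B * F₂) := by
      rw [Matrix.mul_add, Matrix.mul_smul, sub_add_eq_sub_sub]
    simp only [hXdef]
    rw [h2, mapSubC, mapSmulC, hM₁, hM₂]
  have hYeq : ∀ i, Y i = C₁ - (γ i : ℂ) • C₂ := by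
    intro i
    have h2 : C - D * (F₁ + γ i • F₂) = (C - D * F₁) - γ i • (D * F₂) := by
      rw [Matrix.mul_add, Matrix.mul_smul, sub_add_eq_sub_sub]
    simp only [hYdef]
    rw [h2, mapSubC, mapSmulC, hC₁, hC₂]
  -- block-diagonal forms
  have hkdX : kd X = s • (1 : Matrix (Fin N × Fin n) (Fin N × Fin n) ℂ)
      - ((1 : Matrix (Fin N) (Fin N) ℂ) ⊗ₖ M₁
        - diagonal (fun i => (γ i : ℂ)) ⊗ₖ M₂) := by
    have h1 : X = fun i => (s • (1 : Matrix (Fin n) (Fin n) ℂ))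
        - (M₁ - (γ i : ℂ) • M₂) := funext hXeq
    rw [h1, kd_sub, kd_const_smul_one, kd_sub, ← one_kron_eq_kd, ← diagonal_kron_eq_kd]
  have hkdY : kd Y = (1 : Matrix (Fin N) (Fin N) ℂ) ⊗ₖ C₁
      - diagonal (fun i => (γ i : ℂ)) ⊗ₖ C₂ := by
    have h1 : Y = fun i => C₁ - (γ i : ℂ) • C₂ := funext hYeq
    rw [h1, kd_sub, ← one_kron_eq_kd, ← diagonal_kron_eq_kd]
  -- conjugating matrices
  set V : Matrix (Fin N × Fin n) (Fin N × Fin n) ℂ := Uc ⊗ₖ (1 : Matrix (Fin n) (Fin n) ℂ)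
    with hVdef
  set W : Matrix (Fin N × Fin n) (Fin N × Fin n) ℂ := Ucᴴ ⊗ₖ (1 : Matrix (Fin n) (Fin n) ℂ)
    with hWdef
  set Vp : Matrix (Fin N × Fin p) (Fin N × Fin p) ℂ := Uc ⊗ₖ (1 : Matrix (Fin p) (Fin p) ℂ)
    with hVpdef
  set Wd : Matrix (Fin N × Fin nd) (Fin N × Fin nd) ℂ := Ucᴴ ⊗ₖ (1 : Matrix (Fin nd) (Fin nd) ℂ)
    with hWddef
  have hVW : V * W = 1 := by
    rw [hVdef, hWdef, ← mul_kronecker_mul, hU2, Matrix.one_mul, one_kronecker_one]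
  have hWV : W * V = 1 := by
    rw [hVdef, hWdef, ← mul_kronecker_mul, hU1, Matrix.one_mul, one_kronecker_one]
  -- conjugation identities
  have hconjA : ∀ (Q : Matrix (Fin n) (Fin n) ℂ),
      V * (diagonal (fun i => (γ i : ℂ)) ⊗ₖ Q) * W = K.map Complex.ofReal ⊗ₖ Q := by
    intro Q
    rw [hVdef, hWdef, ← mul_kronecker_mul, ← mul_kronecker_mul, Matrix.one_mul,
      Matrix.mul_one, ← hKspec]
  have hconj1 : ∀ (Q : Matrix (Fin n) (Fin n) ℂ),
      V * ((1 : Matrix (Fin N) (Fin N) ℂ) ⊗ₖ Q) * W = (1 : Matrix (Fin N) (Fin N) ℂ) ⊗ₖ Q := by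
    intro Q
    rw [hVdef, hWdef, ← mul_kronecker_mul, ← mul_kronecker_mul]
    simp only [Matrix.one_mul, Matrix.mul_one]
    rw [hU2]
  -- the key factorization of s•1 - Ahat
  have hAmap : Ahat.map Complex.ofReal
      = (1 : Matrix (Fin N) (Fin N) ℂ) ⊗ₖ M₁ - K.map Complex.ofReal ⊗ₖ M₂ := by
    rw [hAhat, mapSubC, map_kron, map_kron, mapOneC]
  have hE : s • (1 : Matrix (Fin N × Fin n) (Fin N × Fin n) ℂ) - Ahat.map Complex.ofReal
      = V * kd X * W := by
    symm
    rw [hkdX, Matrix.mul_sub, Matrix.mul_sub, Matrix.sub_mul, Matrix.sub_mul,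
      hconjA, hconj1]
    rw [show V * (s • (1 : Matrix (Fin N × Fin n) (Fin N × Fin n) ℂ)) * W
        = s • (V * W) by rw [Matrix.mul_smul, Matrix.smul_mul, Matrix.mul_one], hVW, hAmap]
  -- inverses of the blocks
  have hX1 : ∀ i, X i * (X i)⁻¹ = 1 := fun i =>
    Matrix.mul_nonsing_inv _ ((Matrix.isUnit_iff_isUnit_det _).mp (hs i))
  have hX2 : ∀ i, (X i)⁻¹ * X i = 1 := fun i =>
    Matrix.nonsing_inv_mul _ ((Matrix.isUnit_iff_isUnit_det _).mp (hs i))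
  have hkd1 : kd X * kd (fun i => (X i)⁻¹) = 1 := by
    rw [kd_mul, show (fun i => X i * (X i)⁻¹) = fun _ => (1 : Matrix (Fin n) (Fin n) ℂ)
      from funext hX1, kd_one]
  have hkd2 : kd (fun i => (X i)⁻¹) * kd X = 1 := by
    rw [kd_mul, show (fun i => (X i)⁻¹ * X i) = fun _ => (1 : Matrix (Fin n) (Fin n) ℂ)
      from funext hX2, kd_one]
  -- two-sided inverse of E
  have hprod1 : (V * kd X * W) * (V * kd (fun i => (X i)⁻¹) * W) = 1 := by
    simp only [Matrix.mul_assoc]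
    rw [← Matrix.mul_assoc W V, hWV, Matrix.one_mul,
      ← Matrix.mul_assoc (kd X), hkd1, Matrix.one_mul, hVW]
  have hprod2 : (V * kd (fun i => (X i)⁻¹) * W) * (V * kd X * W) = 1 := by
    simp only [Matrix.mul_assoc]
    rw [← Matrix.mul_assoc W V, hWV, Matrix.one_mul,
      ← Matrix.mul_assoc (kd fun i => (X i)⁻¹), hkd2, Matrix.one_mul, hVW]
  have hEunit : IsUnit (s • (1 : Matrix (Fin N × Fin n) (Fin N × Fin n) ℂ)
      - Ahat.map Complex.ofReal) := by
    rw [hE]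
    exact isUnit_iff_exists.mpr ⟨_, hprod1, hprod2⟩
  refine ⟨hEunit, ?_⟩
  have hinv : (s • (1 : Matrix (Fin N × Fin n) (Fin N × Fin n) ℂ)
      - Ahat.map Complex.ofReal)⁻¹ = V * kd (fun i => (X i)⁻¹) * W := by
    rw [hE]
    exact Matrix.inv_eq_right_inv hprod1
  -- factorization of Chat
  have hconjC : ∀ (Q : Matrix (Fin p) (Fin n) ℂ) (dg : Matrix (Fin N) (Fin N) ℂ),
      Vp * (dg ⊗ₖ Q) * W = (Uc * dg * Ucᴴ) ⊗ₖ Q := by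
    intro Q dg
    rw [hVpdef, hWdef, ← mul_kronecker_mul, ← mul_kronecker_mul]
    simp only [Matrix.one_mul, Matrix.mul_one]
  have hCmap : Chat.map Complex.ofReal = Vp * kd Y * W := by
    symm
    rw [hkdY, Matrix.mul_sub, Matrix.sub_mul, hconjC, hconjC]
    rw [show Uc * (1 : Matrix (Fin N) (Fin N) ℂ) * Ucᴴ = 1 by rw [Matrix.mul_one, hU2]]
    rw [show (Uc * diagonal (fun i => (γ i : ℂ)) * Ucᴴ) = K.map Complex.ofReal
      from hKspec.symm]
    rw [hChat, mapSubC, map_kron, map_kron, mapOneC]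
  -- Bd factor
  have hBdmap : ((1 : Matrix (Fin N) (Fin N) ℝ) ⊗ₖ Bd).map Complex.ofReal
      = (1 : Matrix (Fin N) (Fin N) ℂ) ⊗ₖ Bdc := by
    rw [map_kron, mapOneC]
  have hWBd : W * ((1 : Matrix (Fin N) (Fin N) ℂ) ⊗ₖ Bdc)
      = kd (fun _ : Fin N => Bdc) * Wd := by
    rw [← one_kron_eq_kd, hWdef, hWddef, ← mul_kronecker_mul, ← mul_kronecker_mul]
    simp
  -- assemble the product
  set Z : Fin N → Matrix (Fin p) (Fin nd) ℂ := fun i => Y i * (X i)⁻¹ * Bdc with hZdef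
  have hkdZ : kd Z = kd Y * (kd (fun i => (X i)⁻¹) * kd (fun _ : Fin N => Bdc)) := by
    rw [kd_mul, kd_mul]
    simp only [hZdef, Matrix.mul_assoc]
  have hP : Chat.map Complex.ofReal
      * (s • (1 : Matrix (Fin N × Fin n) (Fin N × Fin n) ℂ) - Ahat.map Complex.ofReal)⁻¹
      * ((1 : Matrix (Fin N) (Fin N) ℝ) ⊗ₖ Bd).map Complex.ofReal
      = Vp * kd Z * Wd := by
    rw [hCmap, hinv, hBdmap, hkdZ]
    simp only [Matrix.mul_assoc]
    rw [← Matrix.mul_assoc W V, hWV, Matrix.one_mul, hWBd]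
  rw [hP]
  -- unitary invariance and block sum
  have hVp1 : Vpᴴ * Vp = 1 := by
    rw [hVpdef, kron_conjTranspose, conjTranspose_one, ← mul_kronecker_mul, hU1,
      Matrix.one_mul, one_kronecker_one]
  have hWd1 : Wd * Wdᴴ = 1 := by
    rw [hWddef, kron_conjTranspose, conjTranspose_one, conjTranspose_conjTranspose,
      ← mul_kronecker_mul, hU1, Matrix.one_mul, one_kronecker_one]
  rw [sqFrobNorm_conj Vp (kd Z) Wd hVp1 hWd1, sqFrobNorm_kd]
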